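/- Among all connected simple graphs on n vertices, the path P_n attains the maximum average eccentricity, i.e. for every connected graph G on n vertices, ecc(G) ≤ ecc(P_n). -/

import Mathlib

open SimpleGraph

/-- The eccentricity of a vertex: the maximum distance from it to any other vertex. -/
noncomputable def eccentricity {V : Type*} [Fintype V] (G : SimpleGraph V) (v : V) : ℕ :=
  Finset.univ.sup fun u => G.dist v u

/-- The average eccentricity of a graph. -/
noncomputable def avgEcc {V : Type*} [Fintype V] (G : SimpleGraph V) : ℝ :=
  (∑ v : V, (eccentricity G v : ℝ)) / (Fintype.card V : ℝ)

section Aux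

open Finset

variable {V : Type*} {G : SimpleGraph V} {a b x y z w : V}

/-- A walk avoiding an edge gives reachability in the edge-deleted graph. -/
lemma reach_avoid (p : G.Walk x y) (h : s(a,b) ∉ p.edges) :
    (G.deleteEdges {s(a,b)}).Reachable x y :=
  (p.toDeleteEdges {s(a,b)} (by
    intro e he
    simp only [Set.mem_singleton_iff]
    rintro rfl
    exact h he)).reachable

lemma side_step (hR : (G.deleteEdges {s(a,b)}).Reachable a b) :
    ∀ {x y : V} (_ : G.Walk x y), (G.deleteEdges {s(a,b)}).Reachable x y := by
  intro x y p
  induction p with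
  | nil => exact Reachable.refl _
  | @cons u w v h q ih =>
    by_cases he : s(u, w) = s(a, b)
    · rw [Sym2.eq_iff] at he
      rcases he with ⟨rfl, rfl⟩ | ⟨rfl, rfl⟩
      · exact hR.trans ih
      · exact hR.symm.trans ih
    · exact (SimpleGraph.deleteEdges_adj.mpr ⟨h, by simpa using he⟩).reachable.trans ih

lemma side_carry :
    ∀ {x y : V} (_ : G.Walk x y),
      ((G.deleteEdges {s(a,b)}).Reachable y a ∨ (G.deleteEdges {s(a,b)}).Reachable y b) →
      ((G.deleteEdges {s(a,b)}).Reachable x a ∨ (G.deleteEdges {s(a,b)}).Reachable x b) := by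
  intro x y p
  induction p with
  | nil => exact id
  | @cons u w v h q ih =>
    intro hv
    by_cases he : s(u, w) = s(a, b)
    · rw [Sym2.eq_iff] at he
      rcases he with ⟨rfl, rfl⟩ | ⟨rfl, rfl⟩
      · exact Or.inl (Reachable.refl _)
      · exact Or.inr (Reachable.refl _)
    · have hadj : (G.deleteEdges {s(a,b)}).Adj u w :=
        SimpleGraph.deleteEdges_adj.mpr ⟨h, by simpa using he⟩
      rcases ih hv with h1 | h1
      · exact Or.inl (hadj.reachable.trans h1)
      · exact Or.inr (hadj.reachable.trans h1)

/-- every vertex is on some side of an edge -/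
lemma side_total (hc : G.Connected) (x : V) :
    (G.deleteEdges {s(a,b)}).Reachable x a ∨ (G.deleteEdges {s(a,b)}).Reachable x b := by
  obtain ⟨p⟩ := hc x a
  exact side_carry p (Or.inl (Reachable.refl _))

lemma side_disjoint (hbr : G.IsBridge s(a,b))
    (h1 : (G.deleteEdges {s(a,b)}).Reachable x a)
    (h2 : (G.deleteEdges {s(a,b)}).Reachable x b) : False := by
  have hnr := isBridge_iff.mp hbr
  exact hnr (h1.symm.trans h2)

lemma dist_split {c : V} (p : G.Walk x y) (h : c ∈ p.support) :
    G.dist x c + G.dist c y ≤ p.length := by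
  classical
  have hspec := congrArg Walk.length (p.take_spec h)
  rw [Walk.length_append] at hspec
  calc G.dist x c + G.dist c y ≤ (p.takeUntil c h).length + (p.dropUntil c h).length :=
        Nat.add_le_add (dist_le _) (dist_le _)
    _ = p.length := hspec

/-- swap the edge in the deleted set -/
lemma del_swap : G.deleteEdges {s(b,a)} = G.deleteEdges {s(a,b)} := by
  rw [Sym2.eq_swap]

lemma bridge_swap (hbr : G.IsBridge s(a,b)) : G.IsBridge s(b,a) := by
  rwa [Sym2.eq_swap]

/-- distance to the far endpoint of a bridge, from the near side -/
lemma dist_bridge (hc : G.Connected) (hadj : G.Adj a b) (hbr : G.IsBridge s(a,b))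
    (hxa : (G.deleteEdges {s(a,b)}).Reachable x a) :
    G.dist x b = G.dist x a + 1 := by
  have hab1 : G.dist a b = 1 := dist_eq_one_iff_adj.mpr hadj
  have hle : G.dist x b ≤ G.dist x a + 1 := by
    have := hc.dist_triangle (v := a) (u := x) (w := b)
    omega
  obtain ⟨p, hlen⟩ := hc.exists_walk_length_eq_dist x b
  by_cases he : s(a,b) ∈ p.edges
  · have ha : a ∈ p.support := p.fst_mem_support_of_mem_edges he
    have hkey := dist_split p ha
    omega
  · exact absurd (reach_avoid p he) (fun h => (side_disjoint hbr hxa h).elim)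

lemma dist_cross_bridge (hc : G.Connected) (hadj : G.Adj a b) (hbr : G.IsBridge s(a,b))
    (hxa : (G.deleteEdges {s(a,b)}).Reachable x a)
    (hyb : (G.deleteEdges {s(a,b)}).Reachable y b) :
    G.dist x y = G.dist x a + 1 + G.dist b y := by
  have hab1 : G.dist a b = 1 := dist_eq_one_iff_adj.mpr hadj
  have hyb' : (G.deleteEdges {s(b,a)}).Reachable y b := by rw [del_swap]; exact hyb
  have hya : G.dist y a = G.dist y b + 1 := by
    rw [← del_swap] at hyb
    exact dist_bridge hc hadj.symm (bridge_swap hbr) hyb'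
  have hle : G.dist x y ≤ G.dist x a + 1 + G.dist b y := by
    have h1 := hc.dist_triangle (u := x) (v := a) (w := y)
    have h2 : G.dist a y = G.dist y a := dist_comm ..
    have h3 : G.dist b y = G.dist y b := dist_comm ..
    omega
  obtain ⟨p, hlen⟩ := hc.exists_walk_length_eq_dist x y
  by_cases he : s(a,b) ∈ p.edges
  · have ha : a ∈ p.support := p.fst_mem_support_of_mem_edges he
    have hkey := dist_split p ha
    have h2 : G.dist a y = G.dist y a := dist_comm ..
    have h3 : G.dist b y = G.dist y b := dist_comm ..
    omega
  · exact absurd ((reach_avoid p he).trans hyb)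
      (fun h => (side_disjoint hbr hxa h).elim)

/-- The four-point (tree metric) condition for connected graphs all of whose
edges are bridges. -/
lemma four_point (hc : G.Connected) (hAB : ∀ ⦃c d : V⦄, G.Adj c d → G.IsBridge s(c,d)) :
    ∀ (k : ℕ) (u v x y : V), G.dist u v ≤ k →
      G.dist u v + G.dist x y ≤ max (G.dist u x + G.dist v y) (G.dist u y + G.dist v x) := by
  intro k
  induction k with
  | zero =>
    intro u v x y h
    have huv : u = v := (hc.dist_eq_zero_iff).mp (Nat.le_zero.mp h)
    subst huv
    have h1 := hc.dist_triangle (u := x) (v := u) (w := y)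
    have h2 : G.dist x u = G.dist u x := dist_comm ..
    have h3 : G.dist u u = 0 := SimpleGraph.dist_self
    refine le_trans ?_ (le_max_left _ _)
    omega
  | succ k ih =>
    intro u v x y h
    by_cases hk : G.dist u v ≤ k
    · exact ih u v x y hk
    have hd : G.dist u v = k + 1 := by omega
    obtain ⟨p, hlen⟩ := hc.exists_walk_length_eq_dist u v
    cases p with
    | nil => rw [Walk.length_nil] at hlen; omega
    | @cons _ w _ hadj q =>
      rw [Walk.length_cons] at hlen
      have hqw : G.dist w v ≤ k := by
        have := dist_le q; omega
      have huw1 : G.dist u w = 1 := dist_eq_one_iff_adj.mpr hadj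
      have hwv : G.dist w v = k := by
        have := hc.dist_triangle (u := u) (v := w) (w := v)
        omega
      have hbr := hAB hadj
      -- v is on the w-side of the bridge (u,w)
      have hvw : (G.deleteEdges {s(u,w)}).Reachable v w := by
        rcases side_total (a := u) (b := w) hc v with h1 | h1
        · exfalso
          have := dist_bridge hc hadj hbr h1
          have h2 : G.dist v w = G.dist w v := dist_comm ..
          have h3 : G.dist v u = G.dist u v := dist_comm ..
          omega
        · exact h1
      rcases side_total (a := u) (b := w) hc x with hx | hx
      · -- x on u-side: dist x v = dist x u + dist u v
        have hxv := dist_cross_bridge hc hadj hbr hx hvw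
        have e1 : G.dist x u = G.dist u x := dist_comm ..
        have e2 : G.dist w v = G.dist v w := dist_comm ..
        have e3 : G.dist x v = G.dist v x := dist_comm ..
        have ht := hc.dist_triangle (u := x) (v := u) (w := y)
        have e4 : G.dist x y = G.dist x u + G.dist u y ∨
            G.dist x y ≤ G.dist x u + G.dist u y := Or.inr ht
        refine le_trans ?_ (le_max_right _ _)
        omega
      rcases side_total (a := u) (b := w) hc y with hy | hy
      · -- y on u-side
        have hyv := dist_cross_bridge hc hadj hbr hy hvw
        have e1 : G.dist y u = G.dist u y := dist_comm ..
        have e2 : G.dist w v = G.dist v w := dist_comm ..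
        have e3 : G.dist y v = G.dist v y := dist_comm ..
        have ht := hc.dist_triangle (u := x) (v := u) (w := y)
        have e5 : G.dist x u = G.dist u x := dist_comm ..
        refine le_trans ?_ (le_max_left _ _)
        omega
      · -- both x and y on w-side
        have hx' : (G.deleteEdges {s(w,u)}).Reachable x w := by rw [del_swap]; exact hx
        have hy' : (G.deleteEdges {s(w,u)}).Reachable y w := by rw [del_swap]; exact hy
        have hxu : G.dist x u = G.dist x w + 1 :=
          dist_bridge hc hadj.symm (bridge_swap hbr) hx'
        have hyu : G.dist y u = G.dist y w + 1 :=
          dist_bridge hc hadj.symm (bridge_swap hbr) hy'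
        have hih := ih w v x y (by omega)
        have e1 : G.dist w x = G.dist x w := dist_comm ..
        have e2 : G.dist w y = G.dist y w := dist_comm ..
        have e3 : G.dist u x = G.dist x u := dist_comm ..
        have e4 : G.dist u y = G.dist y u := dist_comm ..
        rcases le_max_iff.mp hih with h1 | h1
        · refine le_trans ?_ (le_max_left _ _); omega
        · refine le_trans ?_ (le_max_right _ _); omega

lemma sg_exists_dist_eq (hc : G.Connected) :
    ∀ (k : ℕ), k ≤ G.dist z w → ∃ s : V, G.dist z s = k ∧ G.dist s w + k = G.dist z w := by
  intro k
  induction k with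
  | zero => exact fun _ => ⟨z, SimpleGraph.dist_self, by omega⟩
  | succ k ih =>
    intro hk
    obtain ⟨s, hs1, hs2⟩ := ih (by omega)
    obtain ⟨p, hlen⟩ := hc.exists_walk_length_eq_dist s w
    cases p with
    | nil =>
      rw [Walk.length_nil] at hlen
      omega
    | @cons _ s' _ hadj q =>
      rw [Walk.length_cons] at hlen
      have hq : G.dist s' w ≤ q.length := dist_le q
      have h5 : G.dist s s' = 1 := dist_eq_one_iff_adj.mpr hadj
      have htri1 := hc.dist_triangle (u := z) (v := s) (w := s')
      have htri2 := hc.dist_triangle (u := z) (v := s') (w := w)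
      exact ⟨s', by omega, by omega⟩

/-- vertices at distance `≥ t` from `z` number at most `card V - t`. -/
lemma card_far_le [Fintype V] [DecidableEq V] (hc : G.Connected) (z : V) (t : ℕ) :
    (univ.filter fun s => t ≤ G.dist z s).card ≤ Fintype.card V - t := by
  classical
  rcases (univ.filter fun s => t ≤ G.dist z s).eq_empty_or_nonempty with he | ⟨w, hw⟩
  · simp [he]
  · rw [mem_filter] at hw
    -- there are at least t vertices at distance < t
    have hmap : ∀ k : ℕ, ∃ s : V, k < t → G.dist z s = k := by
      intro k
      by_cases hk : k < t
      · have hk' : k ≤ G.dist z w := le_trans (le_of_lt hk) hw.2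
        exact (sg_exists_dist_eq (z := z) (w := w) hc k hk').imp (fun s hs _ => hs.1)
      · exact ⟨z, fun h => absurd h hk⟩
    choose f hf using hmap
    have hcard : t ≤ (univ.filter fun s => ¬ t ≤ G.dist z s).card := by
      have : (range t).card ≤ (univ.filter fun s => ¬ t ≤ G.dist z s).card := by
        apply Finset.card_le_card_of_injOn f
        · intro k hk
          simp only [coe_filter, Set.mem_setOf_eq]
          exact ⟨mem_univ _, by rw [hf k (mem_range.mp hk)]; exact Nat.not_le.mpr (mem_range.mp hk)⟩
        · intro k1 h1 k2 h2 heq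
          have e1 := hf k1 (by simpa using h1)
          have e2 := hf k2 (by simpa using h2)
          rw [← e1, ← e2, heq]
      simpa using this
    have := Finset.card_filter_add_card_filter_not
      (s := (univ : Finset V)) (p := fun s => t ≤ G.dist z s)
    rw [Finset.card_univ] at this
    omega

lemma ecc_lt_card [Fintype V] (hc : G.Connected) (hne : Nonempty V) (v : V) :
    eccentricity G v < Fintype.card V := by
  rw [eccentricity, Finset.sup_lt_iff]
  · intro u _
    obtain ⟨p, hp, hlen⟩ := hc.exists_path_of_dist v u
    rw [← hlen]
    exact hp.length_lt
  · exact Fintype.card_pos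

/-- counting lemma for all-bridge connected graphs -/
lemma count_ecc_bridge [Fintype V] [DecidableEq V] (hc : G.Connected)
    (hAB : ∀ ⦃c d : V⦄, G.Adj c d → G.IsBridge s(c,d)) (t : ℕ) (ht : 1 ≤ t) :
    (univ.filter fun v => t ≤ eccentricity G v).card
      ≤ Fintype.card V - (t - (Fintype.card V - t)) := by
  classical
  rcases (univ.filter fun v => t ≤ eccentricity G v).eq_empty_or_nonempty with he | ⟨v0, hv0⟩
  · simp [he]
  have hne : Nonempty V := ⟨v0⟩
  have htn : t + 1 ≤ Fintype.card V := by
    rw [mem_filter] at hv0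
    have h1 := ecc_lt_card hc hne v0
    have h2 := hv0.2
    omega
  -- a diametral pair
  obtain ⟨⟨X, Y⟩, -, hXY⟩ := Finset.exists_max_image (univ : Finset (V × V))
    (fun p => G.dist p.1 p.2) ⟨(v0, v0), mem_univ _⟩
  have hsub : (univ.filter fun v => t ≤ eccentricity G v) ⊆
      (univ.filter fun s => t ≤ G.dist X s) ∪ (univ.filter fun s => t ≤ G.dist Y s) := by
    intro v hv
    rw [mem_filter] at hv
    obtain ⟨u, -, hu⟩ := (Finset.le_sup_iff (by rw [Nat.bot_eq_zero]; omega : (⊥ : ℕ) < t)).mp hv.2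
    have h4 := four_point hc hAB (G.dist v u) v u X Y le_rfl
    have hX : G.dist u X ≤ G.dist X Y := by
      have := hXY (u, X) (mem_univ _)
      have e : G.dist u X = G.dist X u := SimpleGraph.dist_comm ..
      simpa [e] using this
    have hY : G.dist u Y ≤ G.dist X Y := by
      have := hXY (u, Y) (mem_univ _)
      have e : G.dist u Y = G.dist Y u := SimpleGraph.dist_comm ..
      simpa [e] using this
    have hvmax : t ≤ max (G.dist v X) (G.dist v Y) := by
      rcases le_max_iff.mp (le_refl (max (G.dist v X + G.dist u Y) (G.dist v Y + G.dist u X))) with h | h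
      all_goals {
        rcases le_or_gt (G.dist v X + G.dist u Y) (G.dist v Y + G.dist u X) with hcmp | hcmp
        · have : G.dist v u + G.dist X Y ≤ G.dist v Y + G.dist u X := le_trans h4 (by omega)
          have : t ≤ G.dist v Y := by omega
          exact le_trans this (le_max_right _ _)
        · have : G.dist v u + G.dist X Y ≤ G.dist v X + G.dist u Y := le_trans h4 (by omega)
          have : t ≤ G.dist v X := by omega
          exact le_trans this (le_max_left _ _) }
    rw [mem_union, mem_filter, mem_filter]
    rcases le_max_iff.mp hvmax with h | h
    · exact Or.inl ⟨mem_univ _, by rwa [SimpleGraph.dist_comm]⟩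
    · exact Or.inr ⟨mem_univ _, by rwa [SimpleGraph.dist_comm]⟩
  have h1 : (univ.filter fun v => t ≤ eccentricity G v).card ≤ (Fintype.card V - t) + (Fintype.card V - t) := by
    calc (univ.filter fun v => t ≤ eccentricity G v).card
        ≤ ((univ.filter fun s => t ≤ G.dist X s) ∪ (univ.filter fun s => t ≤ G.dist Y s)).card :=
          Finset.card_le_card hsub
      _ ≤ (univ.filter fun s => t ≤ G.dist X s).card +
            (univ.filter fun s => t ≤ G.dist Y s).card := Finset.card_union_le _ _
      _ ≤ (Fintype.card V - t) + (Fintype.card V - t) := Nat.add_le_add (card_far_le hc X t) (card_far_le hc Y t)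
  have h2 : (univ.filter fun v => t ≤ eccentricity G v).card ≤ Fintype.card V := by
    simpa using Finset.card_filter_le univ _
  omega

/-- Deleting a non-bridge edge preserves connectivity. -/
lemma connected_delete_nonbridge (hc : G.Connected) (hadj : G.Adj a b)
    (hnb : ¬ G.IsBridge s(a,b)) : (G.deleteEdges {s(a,b)}).Connected := by
  have hR : (G.deleteEdges {s(a,b)}).Reachable a b := by
    by_contra hn
    exact hnb hn
  have hpre : (G.deleteEdges {s(a,b)}).Preconnected := by
    intro u v
    obtain ⟨p⟩ := hc u v
    exact side_step hR p
  have : Nonempty V := hc.nonempty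
  exact ⟨hpre⟩

lemma ecc_mono [Fintype V] {H : SimpleGraph V} (hle : G ≤ H) (hc : G.Connected) (v : V) :
    eccentricity H v ≤ eccentricity G v := by
  apply Finset.sup_mono_fun
  intro u _
  exact Reachable.dist_anti hle (hc v u)

/-- Counting lemma for general connected graphs. -/
lemma count_ecc [Fintype V] [DecidableEq V] (hc : G.Connected) (t : ℕ) (ht : 1 ≤ t) :
    (univ.filter fun v => t ≤ eccentricity G v).card
      ≤ Fintype.card V - (t - (Fintype.card V - t)) := by
  classical
  obtain ⟨m, hm⟩ : ∃ m, G.edgeSet.ncard ≤ m := ⟨_, le_refl _⟩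
  induction m generalizing G with
  | zero =>
    by_cases hAB : ∀ ⦃c d : V⦄, G.Adj c d → G.IsBridge s(c,d)
    · exact count_ecc_bridge hc hAB t ht
    · push_neg at hAB
      obtain ⟨c, d, hcd, -⟩ := hAB
      exfalso
      have : s(c,d) ∈ G.edgeSet := hcd
      have hfin : G.edgeSet.Finite := Set.toFinite _
      have := Set.ncard_pos (s := G.edgeSet) hfin |>.mpr ⟨_, this⟩
      omega
  | succ m ih =>
    by_cases hAB : ∀ ⦃c d : V⦄, G.Adj c d → G.IsBridge s(c,d)
    · exact count_ecc_bridge hc hAB t ht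
    · push_neg at hAB
      obtain ⟨c, d, hcd, hnb⟩ := hAB
      set H := G.deleteEdges {s(c,d)} with hH
      have hc' : H.Connected := connected_delete_nonbridge hc hcd hnb
      have hle : H ≤ G := SimpleGraph.deleteEdges_le _
      have hcard : H.edgeSet.ncard ≤ m := by
        have he : H.edgeSet = G.edgeSet \ {s(c,d)} := SimpleGraph.edgeSet_deleteEdges _
        have hfin : G.edgeSet.Finite := Set.toFinite _
        have hmem : s(c,d) ∈ G.edgeSet := hcd
        have := Set.ncard_diff_singleton_add_one hmem hfin
        rw [he]
        omega
      have hsub : (univ.filter fun v => t ≤ eccentricity G v)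
          ⊆ (univ.filter fun v => t ≤ eccentricity H v) := by
        intro v hv
        rw [mem_filter] at hv ⊢
        exact ⟨mem_univ _, le_trans hv.2 (ecc_mono hle hc' v)⟩
      calc (univ.filter fun v => t ≤ eccentricity G v).card
          ≤ (univ.filter fun v => t ≤ eccentricity H v).card := Finset.card_le_card hsub
        _ ≤ _ := ih hc' hcard


end Aux

section Aux2
open Finset

/-- layer-cake: writing a sum of bounded naturals by counting level sets. -/
lemma sum_eq_count {α : Type*} [Fintype α] [DecidableEq α] (f : α → ℕ) (K : ℕ)
    (hf : ∀ a, f a ≤ K) :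
    ∑ a : α, f a = ∑ t ∈ Icc 1 K, (univ.filter fun a => t ≤ f a).card := by
  classical
  have h1 : ∀ a ∈ (univ : Finset α), f a = ((Icc 1 K).filter fun t => t ≤ f a).card := by
    intro a _
    have : ((Icc 1 K).filter fun t => t ≤ f a) = Icc 1 (f a) := by
      ext i
      simp only [mem_filter, mem_Icc]
      have := hf a
      omega
    rw [this, Nat.card_Icc]
    omega
  rw [Finset.sum_congr rfl h1]
  simp only [Finset.card_filter]
  exact Finset.sum_comm

lemma path_walk_bound {n : ℕ} {i j : Fin n} (p : (pathGraph n).Walk i j) :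
    i.val ≤ j.val + p.length ∧ j.val ≤ i.val + p.length := by
  induction p with
  | nil => omega
  | @cons u w v h q ih =>
    rw [pathGraph_adj] at h
    rw [Walk.length_cons]
    omega

lemma ecc_path_ge {m : ℕ} (i : Fin (m + 1)) :
    max i.val (m - i.val) ≤ eccentricity (pathGraph (m + 1)) i := by
  have hc : (pathGraph (m + 1)).Connected := pathGraph_connected m
  have h0 : i.val ≤ (pathGraph (m + 1)).dist i ⟨0, Nat.succ_pos m⟩ := by
    obtain ⟨p, hp⟩ := hc.exists_walk_length_eq_dist i ⟨0, Nat.succ_pos m⟩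
    have hb := path_walk_bound p
    have hj : (⟨0, Nat.succ_pos m⟩ : Fin (m+1)).val = 0 := rfl
    rw [hp, hj] at hb
    omega
  have hm : (m : ℕ) - i.val ≤ (pathGraph (m + 1)).dist i ⟨m, Nat.lt_succ_self m⟩ := by
    obtain ⟨p, hp⟩ := hc.exists_walk_length_eq_dist i ⟨m, Nat.lt_succ_self m⟩
    have hb := path_walk_bound p
    have hj : (⟨m, Nat.lt_succ_self m⟩ : Fin (m+1)).val = m := rfl
    rw [hp, hj] at hb
    omega
  have l1 : (pathGraph (m + 1)).dist i ⟨0, Nat.succ_pos m⟩ ≤ eccentricity (pathGraph (m+1)) i :=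
    Finset.le_sup (mem_univ _)
  have l2 : (pathGraph (m + 1)).dist i ⟨m, Nat.lt_succ_self m⟩ ≤ eccentricity (pathGraph (m+1)) i :=
    Finset.le_sup (mem_univ _)
  omega

lemma count_path_ge {m : ℕ} (t : ℕ) (ht1 : 1 ≤ t) (htm : t ≤ m) :
    (m + 1) - (t - ((m + 1) - t)) ≤
      (univ.filter fun i : Fin (m + 1) => t ≤ max i.val (m - i.val)).card := by
  classical
  have hcompl : (univ.filter fun i : Fin (m + 1) => ¬ t ≤ max i.val (m - i.val)).card
      ≤ t - ((m + 1) - t) := by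
    have hsub : ∀ i ∈ (univ.filter fun i : Fin (m + 1) => ¬ t ≤ max i.val (m - i.val)),
        i.val ∈ Ico ((m+1) - t) t := by
      intro i hi
      rw [mem_filter] at hi
      rw [mem_Ico]
      have := i.isLt
      omega
    have : (univ.filter fun i : Fin (m + 1) => ¬ t ≤ max i.val (m - i.val)).card
        ≤ (Ico ((m+1) - t) t).card :=
      Finset.card_le_card_of_injOn (fun i => i.val) hsub (fun a _ b _ h => Fin.val_injective h)
    rw [Nat.card_Ico] at this
    exact this
  have htot := Finset.card_filter_add_card_filter_not
    (s := (univ : Finset (Fin (m+1)))) (p := fun i => t ≤ max i.val (m - i.val))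
  rw [Finset.card_univ, Fintype.card_fin] at htot
  omega

/-- Among connected graphs on `n` vertices, the path `Pₙ` attains the maximum
average eccentricity. -/
theorem avgEcc_le_path {V : Type*} [Fintype V] (G : SimpleGraph V) (hG : G.Connected)
    (n : ℕ) (hn : Fintype.card V = n) :
    avgEcc G ≤ avgEcc (SimpleGraph.pathGraph n) := by
  classical
  cases n with
  | zero =>
    rw [avgEcc, avgEcc, hn]
    simp
  | succ m =>
    have hVne : Nonempty V := Fintype.card_pos_iff.mp (by omega)
    have key : (∑ v : V, eccentricity G v) ≤
        ∑ i : Fin (m + 1), eccentricity (pathGraph (m + 1)) i := by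
      have hK : ∀ v : V, eccentricity G v ≤ m := by
        intro v
        have := ecc_lt_card hG hVne v
        omega
      have hK' : ∀ i : Fin (m+1), max i.val (m - i.val) ≤ m := by
        intro i
        have := i.isLt
        omega
      calc (∑ v : V, eccentricity G v)
          = ∑ t ∈ Icc 1 m, (univ.filter fun v => t ≤ eccentricity G v).card :=
            sum_eq_count _ m hK
        _ ≤ ∑ t ∈ Icc 1 m, ((m + 1) - (t - ((m + 1) - t))) := by
            apply Finset.sum_le_sum
            intro t htm
            rw [mem_Icc] at htm
            have := count_ecc hG t htm.1
            rw [hn] at this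
            exact this
        _ ≤ ∑ t ∈ Icc 1 m, (univ.filter fun i : Fin (m + 1) => t ≤ max i.val (m - i.val)).card := by
            apply Finset.sum_le_sum
            intro t htm
            rw [mem_Icc] at htm
            exact count_path_ge t htm.1 htm.2
        _ = ∑ i : Fin (m + 1), max i.val (m - i.val) := (sum_eq_count _ m hK').symm
        _ ≤ ∑ i : Fin (m + 1), eccentricity (pathGraph (m + 1)) i :=
            Finset.sum_le_sum fun i _ => ecc_path_ge i
    rw [avgEcc, avgEcc, hn, Fintype.card_fin]
    have hcast : (∑ v : V, (eccentricity G v : ℝ)) ≤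
        ∑ i : Fin (m + 1), (eccentricity (pathGraph (m + 1)) i : ℝ) := by
      exact_mod_cast key
    gcongr
end Aux2
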